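/- Let λ ∈ ℝ, α > 0, 0 < β < α, δ > 0, and set γ = √(α² − β²). If x ∈ ℝ satisfies (x/√(δ² + x²)) · K_{λ−3/2}(α√(δ² + x²)) / K_{λ−1/2}(α√(δ² + x²)) = β/α (the mode equation of the generalized hyperbolic distribution GH(λ, α, β, δ, 0)), then x > (β/γ²)·[λ − 3/2 + √((λ − 3/2)² + δ²γ²)]. -/

import Mathlib

open Real MeasureTheory

/-- Modified Bessel function of the second kind. -/
noncomputable def besselK (ν x : ℝ) : ℝ :=
  ∫ t in Set.Ioi (0:ℝ), Real.exp (-x * Real.cosh t) * Real.cosh (ν * t)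

open Set Filter

lemma cosh_le_exp_abs (u : ℝ) : Real.cosh u ≤ Real.exp |u| := by
  rw [Real.cosh_eq]
  have h1 : Real.exp u ≤ Real.exp |u| := Real.exp_le_exp.2 (le_abs_self u)
  have h2 : Real.exp (-u) ≤ Real.exp |u| := Real.exp_le_exp.2 (neg_le_abs u)
  linarith

lemma abs_sinh_le_exp_abs (u : ℝ) : |Real.sinh u| ≤ Real.exp |u| := by
  rw [Real.abs_sinh]
  calc Real.sinh |u| ≤ Real.cosh |u| := (Real.sinh_lt_cosh _).le
    _ ≤ Real.exp |(|u|)| := cosh_le_exp_abs _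
    _ = Real.exp |u| := by rw [abs_abs]

lemma exp_half_le_cosh (t : ℝ) : Real.exp t / 2 ≤ Real.cosh t := by
  rw [Real.cosh_eq]
  have := (Real.exp_pos (-t)).le
  linarith

lemma eventually_le_neg {x : ℝ} (hx : 0 < x) (c : ℝ) :
    ∀ᶠ t in atTop, c * t - x * Real.cosh t ≤ -t := by
  have h0 : Tendsto (fun t : ℝ => t ^ 1 * Real.exp (-t)) atTop (nhds 0) :=
    tendsto_pow_mul_exp_neg_atTop_nhds_zero 1
  have hpos : (0:ℝ) < x / (2 * (|c| + 2)) := by positivity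
  filter_upwards [h0.eventually (gt_mem_nhds hpos), eventually_ge_atTop (0:ℝ)] with t h1 h2
  have h3 : t * Real.exp (-t) < x / (2 * (|c| + 2)) := by simpa using h1
  have h4 : (|c| + 2) * t < x / 2 * Real.exp t := by
    have e1 : Real.exp (-t) = (Real.exp t)⁻¹ := Real.exp_neg t
    have e2 : (0:ℝ) < Real.exp t := Real.exp_pos t
    rw [e1] at h3
    have := (div_lt_iff₀ e2).1 (by rw [div_eq_mul_inv]; exact h3)
    -- t * (exp t)⁻¹ < x/(2(|c|+2)) → t < x/(2(|c|+2)) * exp t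
    have h5 : t < x / (2 * (|c| + 2)) * Real.exp t := this
    have hc : (0:ℝ) < |c| + 2 := by positivity
    rw [div_mul_eq_mul_div, lt_div_iff₀ (by positivity : (0:ℝ) < 2 * (|c|+2))] at h5
    nlinarith [Real.exp_pos t]
  have h6 : x / 2 * Real.exp t ≤ x * Real.cosh t := by
    have := exp_half_le_cosh t
    nlinarith
  have h7 : c * t ≤ |c| * t := by nlinarith [le_abs_self c]
  linarith

lemma tendsto_exp_lin_cosh {x : ℝ} (hx : 0 < x) (c : ℝ) :
    Tendsto (fun t => Real.exp (c * t - x * Real.cosh t)) atTop (nhds 0) := by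
  apply squeeze_zero' (Filter.Eventually.of_forall fun t => (Real.exp_pos _).le)
  · filter_upwards [eventually_le_neg hx c] with t ht
    exact Real.exp_le_exp.2 ht
  · exact Real.tendsto_exp_atBot.comp (tendsto_neg_atBot_iff.2 tendsto_id)

lemma integrableOn_master {x : ℝ} (hx : 0 < x) (c : ℝ) {f : ℝ → ℝ}
    (hcont : ContinuousOn f (Ici 0))
    (hbound : ∀ t, 0 ≤ t → |f t| ≤ Real.exp (c * t - x * Real.cosh t)) :
    IntegrableOn f (Ioi 0) := by
  apply integrable_of_isBigO_exp_neg one_pos hcont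
  rw [Asymptotics.isBigO_iff]
  refine ⟨1, ?_⟩
  filter_upwards [eventually_le_neg hx c, eventually_ge_atTop (0:ℝ)] with t h1 h2
  have := hbound t h2
  rw [Real.norm_eq_abs, Real.norm_eq_abs, one_mul, abs_of_pos (Real.exp_pos _)]
  calc |f t| ≤ Real.exp (c * t - x * Real.cosh t) := this
    _ ≤ Real.exp (-t) := Real.exp_le_exp.2 h1
    _ = Real.exp (-1 * t) := by ring_nf

lemma integrableOn_bk {x : ℝ} (hx : 0 < x) (ν : ℝ) :
    IntegrableOn (fun t => Real.exp (-x * Real.cosh t) * Real.cosh (ν * t)) (Ioi 0) := by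
  apply integrableOn_master hx |ν| (Continuous.continuousOn (by continuity))
  intro t ht
  rw [abs_of_pos (by positivity), show |ν| * t - x * Real.cosh t
    = |ν| * t + -x * Real.cosh t by ring, Real.exp_add, mul_comm]
  gcongr
  calc Real.cosh (ν * t) ≤ Real.exp |ν * t| := cosh_le_exp_abs _
    _ = Real.exp (|ν| * t) := by rw [abs_mul, abs_of_nonneg ht]

lemma integrableOn_bk_sinh {x : ℝ} (hx : 0 < x) (ν : ℝ) :
    IntegrableOn (fun t => Real.exp (-x * Real.cosh t) * (Real.sinh t * Real.sinh (ν * t)))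
      (Ioi 0) := by
  apply integrableOn_master hx (1 + |ν|) (Continuous.continuousOn (by continuity))
  intro t ht
  rw [abs_mul, abs_of_pos (Real.exp_pos _), show (1 + |ν|) * t - x * Real.cosh t
    = (1 + |ν|) * t + -x * Real.cosh t by ring, Real.exp_add, mul_comm]
  gcongr ?_ * _
  calc |Real.sinh t * Real.sinh (ν * t)| = |Real.sinh t| * |Real.sinh (ν * t)| := abs_mul _ _
    _ ≤ Real.exp |t| * Real.exp |ν * t| :=
        mul_le_mul (abs_sinh_le_exp_abs _) (abs_sinh_le_exp_abs _) (abs_nonneg _)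
          (Real.exp_pos _).le
    _ = Real.exp ((1 + |ν|) * t) := by
        rw [← Real.exp_add, abs_mul, abs_of_nonneg ht]; ring_nf

lemma integrableOn_bk_sqrt {x : ℝ} (hx : 0 < x) (a b : ℝ) :
    IntegrableOn (fun t => Real.exp (-x * Real.cosh t) *
      Real.sqrt (Real.cosh (a * t) * Real.cosh (b * t))) (Ioi 0) := by
  apply integrableOn_master hx (|a| + |b|) (Continuous.continuousOn (by continuity))
  intro t ht
  rw [abs_of_nonneg (by positivity), show (|a| + |b|) * t - x * Real.cosh t
    = (|a| + |b|) * t + -x * Real.cosh t by ring, Real.exp_add, mul_comm]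
  gcongr ?_ * _
  have ha : Real.cosh (a*t) ≤ Real.exp (|a| * t) := by
    calc Real.cosh (a*t) ≤ Real.exp |a * t| := cosh_le_exp_abs _
      _ = Real.exp (|a| * t) := by rw [abs_mul, abs_of_nonneg ht]
  have hb : Real.cosh (b*t) ≤ Real.exp (|b| * t) := by
    calc Real.cosh (b*t) ≤ Real.exp |b * t| := cosh_le_exp_abs _
      _ = Real.exp (|b| * t) := by rw [abs_mul, abs_of_nonneg ht]
  have h1 : Real.cosh (a*t) * Real.cosh (b*t) ≤ Real.exp (|a| * t) * Real.exp (|b| * t) :=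
    mul_le_mul ha hb (Real.cosh_pos _).le (Real.exp_pos _).le
  calc Real.sqrt (Real.cosh (a*t) * Real.cosh (b*t))
      ≤ Real.sqrt (Real.exp (|a| * t) * Real.exp (|b| * t)) := Real.sqrt_le_sqrt h1
    _ = Real.sqrt (Real.exp ((|a| + |b|) * t)) := by rw [← Real.exp_add]; ring_nf
    _ ≤ Real.exp ((|a| + |b|) * t) := by
        have hy : 1 ≤ Real.exp ((|a| + |b|) * t) := Real.one_le_exp (by positivity)
        calc Real.sqrt (Real.exp ((|a| + |b|) * t))
            ≤ Real.sqrt ((Real.exp ((|a| + |b|) * t)) ^ 2) := Real.sqrt_le_sqrt (by nlinarith)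
          _ = Real.exp ((|a| + |b|) * t) := Real.sqrt_sq (by linarith)

lemma besselK_pos {x : ℝ} (hx : 0 < x) (ν : ℝ) : 0 < besselK ν x := by
  rw [besselK, setIntegral_pos_iff_support_of_nonneg_ae]
  · have hsub : Ioi (0:ℝ) ⊆ Function.support
        (fun t => Real.exp (-x * Real.cosh t) * Real.cosh (ν * t)) :=
      fun t _ => (by positivity : (0:ℝ) < _).ne'
    rw [Set.inter_eq_right.2 hsub]
    simp [Real.volume_Ioi]
  · exact Filter.Eventually.of_forall fun t => by positivity
  · exact integrableOn_bk hx ν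

lemma besselK_rec {x : ℝ} (hx : 0 < x) (ν : ℝ) :
    besselK (ν + 2) x = besselK ν x + (2 * (ν + 1) / x) * besselK (ν + 1) x := by
  have hx' : x ≠ 0 := hx.ne'
  set g : ℝ → ℝ := fun t => Real.exp (-x * Real.cosh t) * (Real.sinh t * Real.sinh ((ν+1) * t))
    with hg
  -- Step B : ∫ g = ((ν+1)/x) * besselK (ν+1) x
  have stepB : ∫ t in Ioi (0:ℝ), g t = ((ν+1)/x) * besselK (ν+1) x := by
    set F : ℝ → ℝ := fun t => (-1/x) * (Real.exp (-x * Real.cosh t) * Real.sinh ((ν+1) * t))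
      with hF
    have hderiv : ∀ t ∈ Ici (0:ℝ), HasDerivAt F (g t
        - ((ν+1)/x) * (Real.exp (-x * Real.cosh t) * Real.cosh ((ν+1) * t))) t := by
      intro t _
      have h1 : HasDerivAt (fun t => -x * Real.cosh t) (-x * Real.sinh t) t :=
        (Real.hasDerivAt_cosh t).const_mul (-x)
      have h2 : HasDerivAt (fun t => Real.exp (-x * Real.cosh t))
          (Real.exp (-x * Real.cosh t) * (-x * Real.sinh t)) t := h1.exp
      have h3 : HasDerivAt (fun t : ℝ => (ν+1) * t) (ν+1) t := by
        simpa using (hasDerivAt_id t).const_mul (ν+1)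
      have h4 : HasDerivAt (fun t => Real.sinh ((ν+1) * t)) (Real.cosh ((ν+1)*t) * (ν+1)) t :=
        (Real.hasDerivAt_sinh _).comp t h3
      have h5 := (h2.mul h4).const_mul (-1/x)
      refine h5.congr_deriv ?_
      rw [hg]
      field_simp
      ring
    have hint : IntegrableOn (fun t => g t
        - ((ν+1)/x) * (Real.exp (-x * Real.cosh t) * Real.cosh ((ν+1) * t))) (Ioi 0) :=
      (integrableOn_bk_sinh hx (ν+1)).sub (((integrableOn_bk hx (ν+1))).const_mul ((ν+1)/x))
    have htend : Tendsto F atTop (nhds 0) := by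
      apply squeeze_zero_norm' (a := fun t => (1/x) * Real.exp (|ν+1| * t - x * Real.cosh t))
      · filter_upwards [eventually_ge_atTop (0:ℝ)] with t ht
        rw [hF]
        have hb : |Real.sinh ((ν+1)*t)| ≤ Real.exp (|ν+1| * t) := by
          calc |Real.sinh ((ν+1)*t)| ≤ Real.exp |(ν+1)*t| := abs_sinh_le_exp_abs _
            _ = Real.exp (|ν+1| * t) := by rw [abs_mul, abs_of_nonneg ht]
        rw [Real.norm_eq_abs, abs_mul, abs_mul]
        rw [show |(-1 : ℝ)/x| = 1/x by rw [abs_div, abs_neg, abs_one, abs_of_pos hx]]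
        rw [show |ν+1| * t - x * Real.cosh t = -x * Real.cosh t + |ν+1| * t by ring,
          Real.exp_add]
        rw [abs_of_pos (Real.exp_pos _)]
        have := mul_le_mul_of_nonneg_left hb (le_of_lt (Real.exp_pos (-x * Real.cosh t)))
        have h1x : (0:ℝ) ≤ 1/x := by positivity
        exact mul_le_mul_of_nonneg_left this h1x
      · simpa using ((tendsto_exp_lin_cosh hx |ν+1|).const_mul (1/x))
    have := integral_Ioi_of_hasDerivAt_of_tendsto' hderiv hint htend
    have hF0 : F 0 = 0 := by simp [hF]
    rw [hF0, sub_zero] at this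
    rw [integral_sub (integrableOn_bk_sinh hx (ν+1))
        (((integrableOn_bk hx (ν+1))).const_mul ((ν+1)/x)), integral_const_mul] at this
    have hbk : besselK (ν+1) x
        = ∫ t in Ioi (0:ℝ), Real.exp (-x * Real.cosh t) * Real.cosh ((ν+1) * t) := rfl
    rw [← hbk] at this
    linarith
  -- Step A : pointwise identity
  have stepA : ∀ t : ℝ, Real.exp (-x * Real.cosh t) * Real.cosh ((ν+2) * t)
      = Real.exp (-x * Real.cosh t) * Real.cosh (ν * t) + 2 * g t := by
    intro t
    have h1 : (ν+2) * t = (ν+1)*t + t := by ring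
    have h2 : ν * t = (ν+1)*t - t := by ring
    rw [hg, h1, h2, Real.cosh_add, Real.cosh_sub]
    ring
  have : besselK (ν+2) x = ∫ t in Ioi (0:ℝ),
      (Real.exp (-x * Real.cosh t) * Real.cosh (ν * t) + 2 * g t) := by
    rw [besselK]
    exact integral_congr_ae (Filter.Eventually.of_forall fun t => stepA t)
  rw [this, integral_add (integrableOn_bk hx ν)
    ((integrableOn_bk_sinh hx (ν+1)).const_mul 2), integral_const_mul, stepB]
  have hbk : besselK ν x
      = ∫ t in Ioi (0:ℝ), Real.exp (-x * Real.cosh t) * Real.cosh (ν * t) := rfl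
  rw [← hbk]
  ring

lemma cosh_prod_id (a b : ℝ) : Real.cosh (a - b) * Real.cosh (a + b)
    = Real.cosh a ^ 2 + Real.sinh b ^ 2 := by
  rw [Real.cosh_sub, Real.cosh_add]
  nlinarith [Real.cosh_sq_sub_sinh_sq a, Real.cosh_sq_sub_sinh_sq b]

lemma besselK_turan {x : ℝ} (hx : 0 < x) (ν : ℝ) :
    besselK (ν+1) x ^ 2 < besselK ν x * besselK (ν+2) x := by
  set w : ℝ → ℝ := fun t => Real.exp (-x * Real.cosh t) with hw
  set J : ℝ := ∫ t in Ioi (0:ℝ), w t * Real.sqrt (Real.cosh (ν * t) * Real.cosh ((ν+2) * t))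
    with hJ
  -- step 1 : besselK (ν+1) x < J
  have step1 : besselK (ν+1) x < J := by
    have hdiffpos : ∀ t ∈ Ioi (0:ℝ),
        0 < w t * Real.sqrt (Real.cosh (ν * t) * Real.cosh ((ν+2) * t))
          - w t * Real.cosh ((ν+1) * t) := by
      intro t ht
      have hlt : Real.cosh ((ν+1) * t) < Real.sqrt (Real.cosh (ν * t) * Real.cosh ((ν+2) * t)) := by
        rw [Real.lt_sqrt (Real.cosh_pos _).le]
        have := cosh_prod_id ((ν+1)*t) t
        have h1 : (ν+1)*t - t = ν * t := by ring
        have h2 : (ν+1)*t + t = (ν+2) * t := by ring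
        rw [h1, h2] at this
        have hs : 0 < Real.sinh t := (Real.sinh_pos_iff).2 ht
        nlinarith
      have : 0 < w t := Real.exp_pos _
      nlinarith
    have hint1 := integrableOn_bk_sqrt hx ν (ν+2)
    have hint2 := integrableOn_bk hx (ν+1)
    have hpos : 0 < ∫ t in Ioi (0:ℝ),
        (w t * Real.sqrt (Real.cosh (ν * t) * Real.cosh ((ν+2) * t))
          - w t * Real.cosh ((ν+1) * t)) := by
      rw [setIntegral_pos_iff_support_of_nonneg_ae]
      · have hsub : Ioi (0:ℝ) ⊆ Function.support
            (fun t => w t * Real.sqrt (Real.cosh (ν * t) * Real.cosh ((ν+2) * t))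
              - w t * Real.cosh ((ν+1) * t)) := fun t ht => (hdiffpos t ht).ne'
        rw [Set.inter_eq_right.2 hsub]
        simp [Real.volume_Ioi]
      · rw [Filter.EventuallyLE, ae_restrict_iff' measurableSet_Ioi]
        exact Filter.Eventually.of_forall (fun t ht => (hdiffpos t ht).le)
      · exact hint1.sub hint2
    rw [integral_sub hint1 hint2] at hpos
    have : besselK (ν+1) x = ∫ t in Ioi (0:ℝ), w t * Real.cosh ((ν+1) * t) := rfl
    rw [this]
    linarith [hpos]
  -- step 2 : J ≤ sqrt (besselK ν x) * sqrt (besselK (ν+2) x)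
  have step2 : J ≤ Real.sqrt (besselK ν x) * Real.sqrt (besselK (ν+2) x) := by
    set f : ℝ → ℝ := fun t => Real.sqrt (w t * Real.cosh (ν * t)) with hf
    set g : ℝ → ℝ := fun t => Real.sqrt (w t * Real.cosh ((ν+2) * t)) with hgg
    have hpq : Real.HolderConjugate 2 2 := ⟨by norm_num, by norm_num, by norm_num⟩
    have hcf : Continuous f := by
      apply Real.continuous_sqrt.comp; continuity
    have hcg : Continuous g := by
      apply Real.continuous_sqrt.comp; continuity
    have hfm : MemLp f (ENNReal.ofReal 2) (volume.restrict (Ioi 0)) := by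
      rw [show ENNReal.ofReal 2 = 2 by norm_num]
      rw [memLp_two_iff_integrable_sq hcf.aestronglyMeasurable]
      have : (fun t => f t ^ 2) = fun t => w t * Real.cosh (ν * t) := by
        funext t
        exact Real.sq_sqrt (by positivity)
      rw [this]
      exact integrableOn_bk hx ν
    have hgm : MemLp g (ENNReal.ofReal 2) (volume.restrict (Ioi 0)) := by
      rw [show ENNReal.ofReal 2 = 2 by norm_num]
      rw [memLp_two_iff_integrable_sq hcg.aestronglyMeasurable]
      have : (fun t => g t ^ 2) = fun t => w t * Real.cosh ((ν+2) * t) := by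
        funext t
        exact Real.sq_sqrt (by positivity)
      rw [this]
      exact integrableOn_bk hx (ν+2)
    have hCS := integral_mul_le_Lp_mul_Lq_of_nonneg hpq
      (Filter.Eventually.of_forall fun t => Real.sqrt_nonneg _)
      (Filter.Eventually.of_forall fun t => Real.sqrt_nonneg _) hfm hgm
    have hfg : ∀ t : ℝ, f t * g t = w t * Real.sqrt (Real.cosh (ν * t) * Real.cosh ((ν+2) * t)) := by
      intro t
      rw [hf, hgg]
      rw [← Real.sqrt_mul (by positivity)]
      rw [show w t * Real.cosh (ν * t) * (w t * Real.cosh ((ν+2) * t))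
        = (w t)^2 * (Real.cosh (ν * t) * Real.cosh ((ν+2) * t)) by ring]
      rw [Real.sqrt_mul (by positivity), Real.sqrt_sq (by positivity)]
    have hf2 : ∀ t : ℝ, f t ^ (2:ℝ) = w t * Real.cosh (ν * t) := by
      intro t
      rw [show ((2:ℝ)) = ((2:ℕ):ℝ) by norm_num, Real.rpow_natCast]
      exact Real.sq_sqrt (by positivity)
    have hg2 : ∀ t : ℝ, g t ^ (2:ℝ) = w t * Real.cosh ((ν+2) * t) := by
      intro t
      rw [show ((2:ℝ)) = ((2:ℕ):ℝ) by norm_num, Real.rpow_natCast]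
      exact Real.sq_sqrt (by positivity)
    change (∫ t in Ioi (0:ℝ), f t * g t) ≤ (∫ t in Ioi (0:ℝ), f t ^ (2:ℝ)) ^ (1/(2:ℝ)) *
      (∫ t in Ioi (0:ℝ), g t ^ (2:ℝ)) ^ (1/(2:ℝ)) at hCS
    simp only [hfg, hf2, hg2] at hCS
    have e1 : (∫ t in Ioi (0:ℝ), w t * Real.cosh (ν * t)) = besselK ν x := rfl
    have e2 : (∫ t in Ioi (0:ℝ), w t * Real.cosh ((ν+2) * t)) = besselK (ν+2) x := rfl
    rw [e1, e2] at hCS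
    rw [hJ]
    calc (∫ t in Ioi (0:ℝ), w t * Real.sqrt (Real.cosh (ν * t) * Real.cosh ((ν+2) * t)))
        ≤ besselK ν x ^ (1/(2:ℝ)) * besselK (ν+2) x ^ (1/(2:ℝ)) := hCS
      _ = Real.sqrt (besselK ν x) * Real.sqrt (besselK (ν+2) x) := by
          rw [← Real.sqrt_eq_rpow, ← Real.sqrt_eq_rpow]
  have hK1 : 0 ≤ besselK (ν+1) x := by
    have : besselK (ν+1) x = ∫ t in Ioi (0:ℝ), w t * Real.cosh ((ν+1) * t) := rfl
    rw [this]
    exact setIntegral_nonneg measurableSet_Ioi (fun t _ => by positivity)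
  have hlt : besselK (ν+1) x < Real.sqrt (besselK ν x) * Real.sqrt (besselK (ν+2) x) :=
    lt_of_lt_of_le step1 step2
  have hK0 : 0 ≤ besselK ν x :=
    setIntegral_nonneg measurableSet_Ioi (fun t _ => by positivity)
  have hK2 : 0 ≤ besselK (ν+2) x :=
    setIntegral_nonneg measurableSet_Ioi (fun t _ => by positivity)
  have hsq := pow_lt_pow_left₀ hlt hK1 (two_ne_zero)
  rwa [mul_pow, Real.sq_sqrt hK0, Real.sq_sqrt hK2] at hsq

lemma besselK_ratio {s : ℝ} (hs : 0 < s) (μ : ℝ) :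
    (μ + Real.sqrt (μ^2 + s^2)) * besselK μ s < s * besselK (μ+1) s := by
  set A := besselK μ s with hA
  set B := besselK (μ+1) s with hB
  set C := besselK (μ-1) s with hC
  have hA0 : 0 < A := besselK_pos hs μ
  have hB0 : 0 < B := besselK_pos hs (μ+1)
  have htu : A^2 < C * B := by
    have h := besselK_turan hs (μ-1)
    rw [show μ-1+1 = μ by ring, show μ-1+2 = μ+1 by ring] at h
    exact h
  have hrec : B = C + (2*μ/s) * A := by
    have h := besselK_rec hs (μ-1)
    rw [show μ-1+1 = μ by ring, show μ-1+2 = μ+1 by ring] at h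
    exact h
  have hq : s * A^2 + 2*μ*(A*B) < s * B^2 := by
    have hCval : C = B - (2*μ/s)*A := by linarith
    rw [hCval] at htu
    have h := mul_lt_mul_of_pos_left htu hs
    have he : s*((B - (2*μ/s)*A)*B) = s*B^2 - 2*μ*(A*B) := by
      field_simp
    rw [he] at h
    linarith
  set S := Real.sqrt (μ^2 + s^2) with hS
  have hS0 : 0 ≤ S := Real.sqrt_nonneg _
  have hS2 : S^2 = μ^2 + s^2 := Real.sq_sqrt (by positivity)
  have hSmu : μ ≤ S := by nlinarith [sq_nonneg (S - μ), sq_nonneg (S + μ)]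
  by_contra hcon
  push_neg at hcon
  -- hcon : s * B ≤ (μ + S) * A
  have h1 : s * B * B ≤ (μ + S) * A * B := mul_le_mul_of_nonneg_right hcon hB0.le
  have h2 : (s*A)*A < ((S - μ)*B)*A := by linarith
  have h3 : s*A < (S-μ)*B := lt_of_mul_lt_mul_right h2 hA0.le
  have h4 : (S-μ)*(s*B) ≤ (S-μ)*((μ+S)*A) := mul_le_mul_of_nonneg_left hcon (by linarith)
  have h5 : (S-μ)*((μ+S)*A) = s^2*A := by linear_combination A * hS2
  have h6 : s*(s*A) < s*((S-μ)*B) := mul_lt_mul_of_pos_left h3 hs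
  linarith [h4, h5, h6]

set_option maxHeartbeats 1000000 in
theorem stmt_1 (lam α β δ γ : ℝ) (hα : 0 < α) (hβ : 0 < β) (hβα : β < α) (hδ : 0 < δ)
    (hγ : γ = Real.sqrt (α ^ 2 - β ^ 2)) (x : ℝ)
    (hx : x / Real.sqrt (δ ^ 2 + x ^ 2) *
        (besselK (lam - 3 / 2) (α * Real.sqrt (δ ^ 2 + x ^ 2)) /
          besselK (lam - 1 / 2) (α * Real.sqrt (δ ^ 2 + x ^ 2))) = β / α) :
    x > β / γ ^ 2 * (lam - 3 / 2 + Real.sqrt ((lam - 3 / 2) ^ 2 + δ ^ 2 * γ ^ 2)) := by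
  set μ := lam - 3/2 with hμ
  set y := Real.sqrt (δ^2 + x^2) with hy
  have hy0 : 0 < y := Real.sqrt_pos.2 (by positivity)
  have hy2 : y^2 = δ^2 + x^2 := Real.sq_sqrt (by positivity)
  set s := α * y with hs
  have hs0 : 0 < s := by positivity
  have hγ0 : 0 < γ := by
    rw [hγ]; exact Real.sqrt_pos.2 (by nlinarith)
  have hγ2 : γ^2 = α^2 - β^2 := by
    rw [hγ]; exact Real.sq_sqrt (by nlinarith)
  set A := besselK μ s with hA
  set B := besselK (μ+1) s with hB
  have hA0 : 0 < A := besselK_pos hs0 μ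
  have hB0 : 0 < B := besselK_pos hs0 (μ+1)
  have hyne : y ≠ 0 := hy0.ne'
  have hBne : B ≠ 0 := hB0.ne'
  have hαne : α ≠ 0 := hα.ne'
  have hx' : x / y * (A / B) = β / α := by
    have e1 : lam - 1/2 = μ + 1 := by rw [hμ]; ring
    rw [hA, hB, hμ]
    rw [← e1]
    exact hx
  have hxAB : x * A * α = β * y * B := by
    have h1 : x / y * (A / B) * (y * B * α) = β / α * (y * B * α) := by rw [hx']
    have h2 : x / y * (A / B) * (y * B * α) = x * A * α := by field_simp
    have h3 : β / α * (y * B * α) = β * y * B := by field_simp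
    rw [h2, h3] at h1
    exact h1
  -- ratio bound
  set S := Real.sqrt (μ^2 + s^2) with hSdef
  have hS0 : 0 ≤ S := Real.sqrt_nonneg _
  have hS2 : S^2 = μ^2 + s^2 := Real.sq_sqrt (by positivity)
  have hrat : (μ + S) * A < s * B := besselK_ratio hs0 μ
  have habs : Real.sqrt (μ^2) < S := by
    rw [hSdef]
    exact Real.sqrt_lt_sqrt (sq_nonneg μ) (by nlinarith [hs0])
  rw [Real.sqrt_sq_eq_abs] at habs
  have hms : 0 < μ + S := by
    have := neg_abs_le μ
    linarith
  have hsv : s = α * y := hs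
  clear_value A B S y s μ
  clear hx hx' hy hs hSdef hA hB hγ hμ
  -- α² x > β (μ + S)
  have hkey : α^2 * x > β * (μ + S) := by
    have h1 : β * ((μ + S) * A) < β * (s * B) := mul_lt_mul_of_pos_left hrat hβ
    have h2 : β * (s * B) = α^2 * x * A := by
      rw [hsv]
      linear_combination (-α) * hxAB
    have h3 : (β * (μ+S)) * A < (α^2 * x) * A := by linarith [h1, h2]
    exact lt_of_mul_lt_mul_right h3 hA0.le
  have hx0 : 0 < x := by
    have h1 : 0 < α^2 * x := lt_trans (mul_pos hβ hms) hkey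
    nlinarith [h1, mul_pos hα hα]
  -- quadratic inequality
  have hquad : γ^2 * x^2 - 2*μ*β*x - δ^2*β^2 > 0 := by
    have h1 : α^2*x - β*μ > β*S := by linarith [hkey]
    have hbs : 0 ≤ β*S := by positivity
    have h2 : (α^2*x - β*μ)^2 > (β*S)^2 := by nlinarith [h1, hbs]
    have h3 : S^2 = μ^2 + α^2*(δ^2 + x^2) := by
      rw [hS2, hsv]
      linear_combination α^2 * hy2
    have h4 : β^2 * S^2 = β^2*μ^2 + α^2*β^2*δ^2 + α^2*β^2*x^2 := by
      linear_combination β^2 * h3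
    have h5 : (α^2*x - β*μ)^2 > β^2*μ^2 + α^2*β^2*δ^2 + α^2*β^2*x^2 := by linarith [h2, h4]
    have hid : α^2 * (γ^2*x^2 - 2*μ*β*x - δ^2*β^2)
        = (α^2*x - β*μ)^2 - (β^2*μ^2 + α^2*β^2*δ^2 + α^2*β^2*x^2) := by
      linear_combination (x^2*α^2) * hγ2
    have hquadα : 0 < α^2 * (γ^2*x^2 - 2*μ*β*x - δ^2*β^2) := by rw [hid]; linarith [h5]
    nlinarith [hquadα, pow_pos hα 2]
  -- conclude
  set T := Real.sqrt (μ^2 + δ^2*γ^2) with hT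
  have hT0 : 0 ≤ T := Real.sqrt_nonneg _
  have hT2 : T^2 = μ^2 + δ^2*γ^2 := Real.sq_sqrt (by positivity)
  have hTmu : μ ≤ T := by nlinarith [sq_nonneg (T - μ), sq_nonneg (T + μ)]
  rw [gt_iff_lt, ← sub_pos]
  by_contra hcon0
  push_neg at hcon0
  rw [sub_nonpos] at hcon0
  have hγ2ne : (γ:ℝ)^2 ≠ 0 := by positivity
  have hcon' : γ^2 * x ≤ β * (μ + T) := by
    have h := mul_le_mul_of_nonneg_left hcon0 (le_of_lt (by positivity : (0:ℝ) < γ^2))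
    calc γ^2 * x ≤ γ^2 * (β/γ^2 * (μ + T)) := h
      _ = β * (μ + T) := by field_simp
  have hstep1 : (T - μ) * (γ^2 * x) ≤ (T - μ) * (β * (μ + T)) :=
    mul_le_mul_of_nonneg_left hcon' (by linarith)
  have hstep2 : (T - μ) * (β * (μ + T)) = β * (δ^2 * γ^2) := by linear_combination β * hT2
  have hstep3 : (γ^2 * x) * x ≤ (β * (μ + T)) * x := mul_le_mul_of_nonneg_right hcon' hx0.le
  have hq2 : β*x*T - β*x*μ - δ^2*β^2 > 0 := by linarith [hquad, hstep3]
  have hq3 : (T - μ) * (γ^2 * x) ≤ β * (δ^2 * γ^2) := hstep2 ▸ hstep1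
  have h7 := mul_lt_mul_of_pos_left hq2 (show (0:ℝ) < γ^2 by positivity)
  have h8 := mul_le_mul_of_nonneg_left hq3 hβ.le
  linarith [h7, h8]
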